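/- θ(d) → 1 as d → ∞; that is, the sequence d ↦ θ(d) = (d/(2π)^d) ∫_{(−π,π]^d} dp / E(p), defined for d ≥ 3, tends to 1 along the filter atTop. -/

import Mathlib

open MeasureTheory Real Filter
open Set


noncomputable def hh (t : ℝ) : ℝ := ∫ p in Set.Ioc (-π) π, Real.exp (-(t * (1 - Real.cos p)))

lemma cont_integrand (t : ℝ) : Continuous fun p : ℝ => rexp (-(t * (1 - Real.cos p))) := by
  continuity

lemma integrand_intOn (t : ℝ) :
    IntegrableOn (fun p : ℝ => rexp (-(t * (1 - Real.cos p)))) (Set.Ioc (-π) π) :=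
  (cont_integrand t).integrableOn_Ioc

lemma one_sub_cos_nonneg (p : ℝ) : 0 ≤ 1 - Real.cos p := by
  nlinarith [Real.cos_le_one p]

lemma hh_nonneg (t : ℝ) : 0 ≤ hh t :=
  setIntegral_nonneg measurableSet_Ioc (fun p _ => (Real.exp_pos _).le)

lemma hh_anti {t s : ℝ} (h : t ≤ s) : hh s ≤ hh t := by
  refine setIntegral_mono_on (integrand_intOn s) (integrand_intOn t) measurableSet_Ioc ?_
  intro p _
  exact Real.exp_le_exp.2 (by nlinarith [one_sub_cos_nonneg p])

lemma integral_cos_Ioc : ∫ p in Set.Ioc (-π) π, Real.cos p = 0 := by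
  rw [← intervalIntegral.integral_of_le (by linarith [Real.pi_pos] : -π ≤ π)]
  simp [integral_cos]

lemma integral_cos_sq_Ioc : ∫ p in Set.Ioc (-π) π, Real.cos p ^ 2 = π := by
  rw [← intervalIntegral.integral_of_le (by linarith [Real.pi_pos] : -π ≤ π)]
  rw [integral_cos_sq]
  simp

lemma hh_ge (t : ℝ) : 2 * π * rexp (-t) ≤ hh t := by
  have key : ∀ p : ℝ, rexp (-t) * (1 + t * Real.cos p) ≤ rexp (-(t * (1 - Real.cos p))) := by
    intro p
    have h1 : t * Real.cos p + 1 ≤ rexp (t * Real.cos p) := Real.add_one_le_exp _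
    have h2 : rexp (-(t * (1 - Real.cos p))) = rexp (-t) * rexp (t * Real.cos p) := by
      rw [← Real.exp_add]; ring_nf
    rw [h2]
    have := Real.exp_pos (-t)
    nlinarith
  have hint : IntegrableOn (fun p : ℝ => rexp (-t) * (1 + t * Real.cos p)) (Set.Ioc (-π) π) :=
    (Continuous.integrableOn_Ioc (by continuity))
  have := setIntegral_mono_on hint (integrand_intOn t) measurableSet_Ioc (fun p _ => key p)
  calc 2 * π * rexp (-t) = ∫ p in Set.Ioc (-π) π, rexp (-t) * (1 + t * Real.cos p) := by
        rw [integral_const_mul]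
        rw [integral_add (integrableOn_const (by simp [Real.volume_Ioc]) : IntegrableOn (fun _ : ℝ => (1:ℝ)) (Set.Ioc (-π) π) volume)
          ((Continuous.integrableOn_Ioc (by continuity) : IntegrableOn (fun a : ℝ => t * Real.cos a) (Set.Ioc (-π) π) volume))]
        rw [integral_const, integral_const_mul, integral_cos_Ioc]
        simp [Real.volume_Ioc]
        rw [max_eq_left (by positivity)]
        ring
    _ ≤ hh t := this

lemma exp_neg_le_quad {y : ℝ} (hy : 0 ≤ y) : rexp (-y) ≤ 1 - y + y ^ 2 := by
  have h1 : y + 1 ≤ rexp y := Real.add_one_le_exp y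
  have h2 : rexp (-y) * rexp y = 1 := by rw [← Real.exp_add]; simp
  nlinarith [Real.exp_pos y, Real.exp_pos (-y), sq_nonneg y]

lemma volume_Ioc_pi : (volume (Set.Ioc (-π) π)).toReal = 2 * π := by
  simp [Real.volume_Ioc]
  rw [ENNReal.toReal_ofReal (by positivity)]
  ring

lemma integrand_le_one {t p : ℝ} (ht : 0 ≤ t) : rexp (-(t * (1 - Real.cos p))) ≤ 1 := by
  rw [Real.exp_le_one_iff]
  nlinarith [Real.cos_le_one p]

lemma hh_le_two_pi {t : ℝ} (ht : 0 ≤ t) : hh t ≤ 2 * π := by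
  have : hh t ≤ ∫ _ in Set.Ioc (-π) π, (1 : ℝ) :=
    setIntegral_mono_on (integrand_intOn t)
      (integrableOn_const (by simp [Real.volume_Ioc]))
      measurableSet_Ioc (fun p _ => integrand_le_one ht)
  refine this.trans_eq ?_
  simp [Real.volume_Ioc]
  rw [max_eq_left (by positivity)]
  ring

lemma hh_le_quad {t : ℝ} (ht : 0 ≤ t) : hh t ≤ 2 * π * (1 - t) + 3 * π * t ^ 2 := by
  have key : ∀ p : ℝ, rexp (-(t * (1 - Real.cos p))) ≤
      1 - t * (1 - Real.cos p) + t ^ 2 * (1 - Real.cos p) ^ 2 := by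
    intro p
    have := exp_neg_le_quad (y := t * (1 - Real.cos p))
      (mul_nonneg ht (one_sub_cos_nonneg p))
    calc rexp (-(t * (1 - Real.cos p))) ≤ 1 - t * (1 - Real.cos p) + (t * (1 - Real.cos p)) ^ 2 :=
          this
      _ = 1 - t * (1 - Real.cos p) + t ^ 2 * (1 - Real.cos p) ^ 2 := by ring
  have hint : IntegrableOn
      (fun p : ℝ => 1 - t * (1 - Real.cos p) + t ^ 2 * (1 - Real.cos p) ^ 2)
      (Set.Ioc (-π) π) := Continuous.integrableOn_Ioc (by continuity)
  have hmono := setIntegral_mono_on (integrand_intOn t) hint measurableSet_Ioc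
    (fun p _ => key p)
  have hval : ∫ p in Set.Ioc (-π) π,
      (1 - t * (1 - Real.cos p) + t ^ 2 * (1 - Real.cos p) ^ 2) =
      2 * π * (1 - t) + 3 * π * t ^ 2 := by
    have e1 : ∀ p : ℝ, 1 - t * (1 - Real.cos p) + t ^ 2 * (1 - Real.cos p) ^ 2 =
        (1 - t + t ^ 2) + (t + (-2) * t ^ 2) * Real.cos p + t ^ 2 * Real.cos p ^ 2 := by
      intro p; ring
    simp_rw [e1]
    rw [integral_add (Continuous.integrableOn_Ioc (by continuity))
        (Continuous.integrableOn_Ioc (by continuity)),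
      integral_add (Continuous.integrableOn_Ioc (by continuity))
        (Continuous.integrableOn_Ioc (by continuity))]
    rw [integral_const_mul, integral_const_mul, integral_cos_Ioc, integral_cos_sq_Ioc,
      setIntegral_const, smul_eq_mul, measureReal_def, volume_Ioc_pi]
    ring
  exact hmono.trans_eq hval

lemma sin_sq_ge {y : ℝ} (h0 : 0 ≤ y) (h1 : y ≤ 1) : y ^ 2 / 2 ≤ Real.sin y ^ 2 := by
  rcases eq_or_lt_of_le h0 with h | h
  · simp [← h]
  · have := Real.sin_gt_sub_cube h
    have hy3 : y ^ 3 ≤ y := by nlinarith [mul_nonneg h0 (sub_nonneg.2 (by nlinarith : y ^ 2 ≤ 1))]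
    have hs : 3 / 4 * y ≤ Real.sin y := by nlinarith
    nlinarith [Real.sin_nonneg_of_nonneg_of_le_pi h0 (h1.trans (by linarith [Real.pi_gt_three]))]

lemma one_sub_cos_ge_sq {p : ℝ} (hp : |p| ≤ 2) : p ^ 2 / 4 ≤ 1 - Real.cos p := by
  have hsq : Real.sin (p / 2) ^ 2 = 1 / 2 - Real.cos p / 2 := by
    have := Real.cos_sq (p / 2)
    have h2 : 2 * (p / 2) = p := by ring
    rw [h2] at this
    nlinarith [Real.sin_sq_add_cos_sq (p / 2)]
  have habs : Real.sin (|p| / 2) ^ 2 = Real.sin (p / 2) ^ 2 := by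
    rcases abs_cases p with ⟨h, _⟩ | ⟨h, _⟩ <;> rw [h]
    simp [neg_div, Real.sin_neg]
  have key : (|p| / 2) ^ 2 / 2 ≤ Real.sin (|p| / 2) ^ 2 :=
    sin_sq_ge (by positivity) (by linarith)
  have : |p| ^ 2 = p ^ 2 := sq_abs p
  nlinarith

lemma one_sub_cos_ge_one {p : ℝ} (h2 : 2 ≤ |p|) (hp : |p| ≤ π) : 1 ≤ 1 - Real.cos p := by
  have hc : Real.cos |p| ≤ 0 := by
    apply Real.cos_nonpos_of_pi_div_two_le_of_le
    · linarith [Real.pi_le_four]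
    · linarith [Real.pi_pos]
  have : Real.cos |p| = Real.cos p := by
    rcases abs_cases p with ⟨h, _⟩ | ⟨h, _⟩ <;> rw [h] <;> simp [Real.cos_neg]
  linarith [this ▸ hc]

lemma hh_sqrt {t : ℝ} (ht : 1 / 2 ≤ t) :
    hh t ≤ (2 * Real.sqrt π + 2 * Real.sqrt 2 * π) / Real.sqrt t := by
  have ht0 : 0 < t := by linarith
  have key : ∀ p ∈ Set.Ioc (-π) π,
      rexp (-(t * (1 - Real.cos p))) ≤ rexp (-(t / 4) * p ^ 2) + rexp (-t) := by
    intro p hp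
    have hpabs : |p| ≤ π := abs_le.2 ⟨by linarith [hp.1], hp.2⟩
    rcases le_or_gt (|p|) 2 with h | h
    · have := one_sub_cos_ge_sq h
      have : rexp (-(t * (1 - Real.cos p))) ≤ rexp (-(t / 4) * p ^ 2) := by
        apply Real.exp_le_exp.2
        nlinarith
      linarith [Real.exp_pos (-t)]
    · have := one_sub_cos_ge_one h.le hpabs
      have : rexp (-(t * (1 - Real.cos p))) ≤ rexp (-t) := by
        apply Real.exp_le_exp.2
        nlinarith
      linarith [Real.exp_pos (-(t / 4) * p ^ 2)]
  have hint : IntegrableOn (fun p : ℝ => rexp (-(t / 4) * p ^ 2) + rexp (-t))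
      (Set.Ioc (-π) π) := Continuous.integrableOn_Ioc (by continuity)
  have hmono := setIntegral_mono_on (integrand_intOn t) hint measurableSet_Ioc key
  have hsplit : ∫ p in Set.Ioc (-π) π, (rexp (-(t / 4) * p ^ 2) + rexp (-t)) =
      (∫ p in Set.Ioc (-π) π, rexp (-(t / 4) * p ^ 2)) + 2 * π * rexp (-t) := by
    rw [integral_add (Continuous.integrableOn_Ioc (by continuity) : IntegrableOn (fun p : ℝ => rexp (-(t / 4) * p ^ 2)) (Set.Ioc (-π) π) volume)
      (integrableOn_const (by simp [Real.volume_Ioc]) : IntegrableOn (fun _ : ℝ => rexp (-t)) (Set.Ioc (-π) π) volume)]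
    rw [setIntegral_const, smul_eq_mul, measureReal_def, volume_Ioc_pi]
  have hgauss : (∫ p in Set.Ioc (-π) π, rexp (-(t / 4) * p ^ 2)) ≤
      2 * Real.sqrt π / Real.sqrt t := by
    have h1 : (∫ p in Set.Ioc (-π) π, rexp (-(t / 4) * p ^ 2)) ≤
        ∫ p : ℝ, rexp (-(t / 4) * p ^ 2) :=
      setIntegral_le_integral (integrable_exp_neg_mul_sq (by positivity))
        (Filter.Eventually.of_forall fun p => (Real.exp_pos _).le)
    rw [integral_gaussian] at h1
    refine h1.trans_eq ?_
    rw [show π / (t / 4) = 2 ^ 2 * (π / t) by field_simp; ring,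
      Real.sqrt_mul (by positivity), Real.sqrt_sq (by norm_num : (0:ℝ) ≤ 2),
      Real.sqrt_div Real.pi_pos.le]
    ring
  have hst : 0 < Real.sqrt t := Real.sqrt_pos.2 ht0
  have hexp : rexp (-t) ≤ Real.sqrt 2 / Real.sqrt t := by
    have h1 : t ≤ rexp t := by linarith [Real.add_one_le_exp t]
    have h2 : rexp (-t) ≤ 1 / t := by
      rw [Real.exp_neg]
      exact le_of_le_of_eq ((inv_le_inv₀ (Real.exp_pos t) ht0).2 h1) (one_div t).symm
    have h3 : 1 ≤ Real.sqrt 2 * Real.sqrt t := by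
      rw [← Real.sqrt_mul (by norm_num : (0:ℝ) ≤ 2)]
      have : (1 : ℝ) ≤ 2 * t := by linarith
      calc (1:ℝ) = Real.sqrt 1 := by simp
        _ ≤ Real.sqrt (2 * t) := Real.sqrt_le_sqrt this
    have h4 : Real.sqrt t * Real.sqrt t = t := Real.mul_self_sqrt ht0.le
    rw [le_div_iff₀ hst]
    calc rexp (-t) * Real.sqrt t ≤ (1 / t) * Real.sqrt t :=
          mul_le_mul_of_nonneg_right h2 hst.le
      _ ≤ Real.sqrt 2 := by
          rw [div_mul_eq_mul_div, one_mul, div_le_iff₀ ht0]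
          nlinarith [mul_nonneg hst.le (sub_nonneg.2 h3), h4]
  calc hh t ≤ (∫ p in Set.Ioc (-π) π, rexp (-(t / 4) * p ^ 2)) + 2 * π * rexp (-t) :=
        hmono.trans_eq hsplit
    _ ≤ 2 * Real.sqrt π / Real.sqrt t + 2 * π * (Real.sqrt 2 / Real.sqrt t) := by
        have := mul_le_mul_of_nonneg_left hexp (by positivity : (0:ℝ) ≤ 2 * π)
        linarith
    _ = (2 * Real.sqrt π + 2 * Real.sqrt 2 * π) / Real.sqrt t := by
        field_simp

lemma hh_le_exp_eps {ε t : ℝ} (hε : 0 < ε) (ht : 0 ≤ t) (htδ : t ≤ 2 / 3 * ε) :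
    hh t ≤ 2 * π * rexp (-((1 - ε) * t)) := by
  have h1 : hh t ≤ 2 * π * (1 - t + 3 / 2 * t ^ 2) := by
    have := hh_le_quad ht
    nlinarith [Real.pi_pos]
  have h2 : 1 - t + 3 / 2 * t ^ 2 ≤ rexp (-t + 3 / 2 * t ^ 2) := by
    have := Real.add_one_le_exp (-t + 3 / 2 * t ^ 2)
    linarith
  have h3 : rexp (-t + 3 / 2 * t ^ 2) ≤ rexp (-((1 - ε) * t)) := by
    apply Real.exp_le_exp.2
    nlinarith
  nlinarith [Real.pi_pos, (h2.trans h3)]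

-- the cube and the energy
variable (d : ℕ)

abbrev cube (d : ℕ) : Set (Fin d → ℝ) := Set.univ.pi fun _ : Fin d => Set.Ioc (-π) π

noncomputable def Efun (d : ℕ) (p : Fin d → ℝ) : ℝ := ∑ j : Fin d, (1 - Real.cos (p j))

lemma Efun_cont : Continuous (Efun d) := by
  unfold Efun
  exact continuous_finset_sum _ fun j _ =>
    continuous_const.sub (Real.continuous_cos.comp (continuous_apply j))

lemma Efun_nonneg (p : Fin d → ℝ) : 0 ≤ Efun d p :=
  Finset.sum_nonneg fun j _ => one_sub_cos_nonneg (p j)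

lemma restrict_cube_eq :
    (volume : Measure (Fin d → ℝ)).restrict (cube d) =
      Measure.pi fun _ : Fin d => (volume : Measure ℝ).restrict (Set.Ioc (-π) π) := by
  refine (Measure.pi_eq fun s hs => ?_).symm
  rw [Measure.restrict_apply (MeasurableSet.univ_pi hs)]
  rw [← Set.pi_inter_distrib]
  rw [volume_pi_pi]
  exact Finset.prod_congr rfl fun i _ =>
    (Measure.restrict_apply (hs i)).symm

-- type synonym carrying the restricted measure
def R' : Type := ℝ

instance : MeasurableSpace R' := inferInstanceAs (MeasurableSpace ℝ)

noncomputable instance : MeasureSpace R' :=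
  { toMeasurableSpace := inferInstanceAs (MeasurableSpace ℝ),
    volume := (volume : Measure ℝ).restrict (Set.Ioc (-π) π) }

instance : SigmaFinite (volume : Measure R') :=
  inferInstanceAs (SigmaFinite ((volume : Measure ℝ).restrict (Set.Ioc (-π) π)))

lemma cube_prod_integral (t : ℝ) :
    ∫ p in cube d, rexp (-(t * Efun d p)) = hh t ^ d := by
  have e1 : ∀ p : Fin d → ℝ, rexp (-(t * Efun d p)) =
      ∏ j : Fin d, rexp (-(t * (1 - Real.cos (p j)))) := by
    intro p
    rw [← Real.exp_sum]
    congr 1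
    rw [Efun, Finset.mul_sum, ← Finset.sum_neg_distrib]
  simp_rw [e1]
  rw [restrict_cube_eq]
  have := MeasureTheory.integral_fintype_prod_eq_pow (ι := Fin d)
    (f := fun y : R' => rexp (-(t * (1 - Real.cos y)))) (μ := (volume : Measure R'))
  rw [Fintype.card_fin] at this; exact this

lemma point_lintegral {b : ℝ} (hb : 0 < b) :
    ∫⁻ t in Set.Ioi (0:ℝ), ENNReal.ofReal (rexp (-(t * b))) = ENNReal.ofReal (1 / b) := by
  have hint : IntegrableOn (fun t : ℝ => rexp (-(t * b))) (Set.Ioi 0) := by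
    have := exp_neg_integrableOn_Ioi 0 hb
    simpa [neg_mul, mul_comm] using this
  rw [← MeasureTheory.ofReal_integral_eq_lintegral_ofReal hint
    (Filter.Eventually.of_forall fun t => (Real.exp_pos _).le)]
  congr 1
  have := integral_comp_mul_left_Ioi (fun x => rexp (-x)) 0 hb
  simp only [mul_zero] at this
  rw [integral_exp_neg_Ioi_zero] at this
  calc ∫ t in Set.Ioi (0:ℝ), rexp (-(t * b))
      = ∫ t in Set.Ioi (0:ℝ), rexp (-(b * t)) := by
        congr 1; ext t; rw [mul_comm]
    _ = b⁻¹ := by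
        rw [this]; simp
    _ = 1 / b := (one_div b).symm

lemma cube_finite (d : ℕ) : IsFiniteMeasure ((volume : Measure (Fin d → ℝ)).restrict (cube d)) := by
  constructor
  rw [Measure.restrict_apply MeasurableSet.univ, Set.univ_inter, volume_pi_pi]
  exact ENNReal.prod_lt_top fun i _ => by simp [Real.volume_Ioc]

lemma efun_pos_ae (d : ℕ) (hd : 1 ≤ d) :
    ∀ᵐ p ∂((volume : Measure (Fin d → ℝ)).restrict (cube d)), 0 < Efun d p := by
  have hmeas : MeasurableSet {p : Fin d → ℝ | Efun d p ≤ 0} :=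
    measurableSet_le (Efun_cont d).measurable measurable_const
  have hsub : {p : Fin d → ℝ | Efun d p ≤ 0} ∩ cube d ⊆ {fun _ => 0} := by
    intro p ⟨hp0, hpc⟩
    have hzero : Efun d p = 0 := le_antisymm hp0 (Efun_nonneg d p)
    have hterm : ∀ j : Fin d, 1 - Real.cos (p j) = 0 := by
      intro j
      have := Finset.sum_eq_zero_iff_of_nonneg
        (fun j _ => one_sub_cos_nonneg (p j)) |>.1 hzero j (Finset.mem_univ j)
      exact this
    have : ∀ j, p j = 0 := by
      intro j
      have hcos : Real.cos (p j) = 1 := by linarith [hterm j]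
      obtain ⟨n, hn⟩ := (Real.cos_eq_one_iff _).1 hcos
      have hmem := hpc j (Set.mem_univ j)
      simp only [Set.mem_Ioc] at hmem
      have hπ := Real.pi_pos
      have hr1 : (n : ℝ) < 1 := by nlinarith [hmem.1, hmem.2]
      have hr2 : (-1 : ℝ) < (n : ℝ) := by nlinarith [hmem.1, hmem.2]
      have h1 : n < 1 := by exact_mod_cast hr1
      have h2 : -1 < n := by exact_mod_cast hr2
      have : n = 0 := by omega
      rw [this] at hn
      simpa using hn.symm
    simp only [Set.mem_singleton_iff]
    funext j
    exact this j
  have hnull : ((volume : Measure (Fin d → ℝ)).restrict (cube d)) {p | Efun d p ≤ 0} = 0 := by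
    rw [Measure.restrict_apply hmeas]
    refine measure_mono_null hsub ?_
    have : ({fun _ => 0} : Set (Fin d → ℝ)) = Set.univ.pi fun _ : Fin d => ({0} : Set ℝ) := by
      ext p
      simp [funext_iff]
    rw [this, volume_pi_pi]
    simp only [Real.volume_singleton]
    rw [Finset.prod_const]
    exact zero_pow (by simpa using Nat.one_le_iff_ne_zero.1 hd)
  have := measure_eq_zero_iff_ae_notMem.1 hnull
  filter_upwards [this] with p hp
  exact lt_of_not_ge hp

lemma key_identity (d : ℕ) (hd : 1 ≤ d) :
    ∫⁻ p in cube d, ENNReal.ofReal (1 / Efun d p) =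
      ∫⁻ t in Set.Ioi (0:ℝ), ENNReal.ofReal (hh t ^ d) := by
  have step1 : ∫⁻ p in cube d, ENNReal.ofReal (1 / Efun d p) =
      ∫⁻ p in cube d, ∫⁻ t in Set.Ioi (0:ℝ),
        ENNReal.ofReal (rexp (-(t * Efun d p))) := by
    refine lintegral_congr_ae ?_
    filter_upwards [efun_pos_ae d hd] with p hp
    exact (point_lintegral hp).symm
  have step2 : ∫⁻ p in cube d, ∫⁻ t in Set.Ioi (0:ℝ),
        ENNReal.ofReal (rexp (-(t * Efun d p))) =
      ∫⁻ t in Set.Ioi (0:ℝ), ∫⁻ p in cube d,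
        ENNReal.ofReal (rexp (-(t * Efun d p))) := by
    apply MeasureTheory.lintegral_lintegral_swap
    apply Continuous.aemeasurable
    apply ENNReal.continuous_ofReal.comp
    apply Real.continuous_exp.comp
    exact (continuous_snd.mul ((Efun_cont d).comp continuous_fst)).neg
  have step3 : ∀ t ∈ Set.Ioi (0:ℝ),
      (∫⁻ p in cube d, ENNReal.ofReal (rexp (-(t * Efun d p)))) =
        ENNReal.ofReal (hh t ^ d) := by
    intro t ht
    have ht0 : 0 ≤ t := (le_of_lt ht)
    haveI := cube_finite d
    have hint : Integrable (fun p : Fin d → ℝ => rexp (-(t * Efun d p)))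
        ((volume : Measure (Fin d → ℝ)).restrict (cube d)) := by
      refine Integrable.mono' (integrable_const 1)
        ((Real.continuous_exp.comp ((continuous_const.mul (Efun_cont d)).neg)).aestronglyMeasurable) ?_
      refine Filter.Eventually.of_forall fun p => ?_
      rw [Real.norm_eq_abs, abs_of_pos (Real.exp_pos _), Real.exp_le_one_iff]
      simp only [neg_nonpos]
      exact mul_nonneg ht0 (Efun_nonneg d p)
    rw [← MeasureTheory.ofReal_integral_eq_lintegral_ofReal hint
      (Filter.Eventually.of_forall fun p => (Real.exp_pos _).le)]
    rw [cube_prod_integral d t]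
  rw [step1, step2]
  exact setLIntegral_congr_fun measurableSet_Ioi
    step3

lemma tail_lintegral :
    ∫⁻ t in Set.Ioi (1/2 : ℝ), ENNReal.ofReal (t ^ (-2 : ℝ)) = ENNReal.ofReal 2 := by
  rw [← MeasureTheory.ofReal_integral_eq_lintegral_ofReal
    (integrableOn_Ioi_rpow_of_lt (by norm_num) (by norm_num : (0:ℝ) < 1/2)) ?_]
  · congr 1
    rw [integral_Ioi_rpow_of_lt (by norm_num) (by norm_num : (0:ℝ) < 1/2)]
    norm_num
  · filter_upwards [ae_restrict_mem measurableSet_Ioi] with t ht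
    exact Real.rpow_nonneg (by linarith [Set.mem_Ioi.1 ht]) _

noncomputable def JJ (d : ℕ) : ENNReal := ∫⁻ t in Set.Ioi (0:ℝ), ENNReal.ofReal (hh t ^ d)

lemma J_lower (d : ℕ) (hd : 1 ≤ d) : ENNReal.ofReal ((2*π)^d * (1/d)) ≤ JJ d := by
  have hb : (0:ℝ) < d := by exact_mod_cast hd
  have point : ∀ t ∈ Set.Ioi (0:ℝ),
      ENNReal.ofReal ((2*π)^d * rexp (-(t * d))) ≤ ENNReal.ofReal (hh t ^ d) := by
    intro t ht
    apply ENNReal.ofReal_le_ofReal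
    have h1 : (2*π*rexp (-t)) ^ d ≤ hh t ^ d :=
      pow_le_pow_left₀ (by positivity) (hh_ge t) d
    calc (2*π)^d * rexp (-(t * d)) = (2*π*rexp (-t))^d := by
          have he : rexp (-(t * d)) = rexp (-t) ^ d := by
            rw [← Real.exp_nat_mul]; ring_nf
          rw [he, mul_pow, mul_pow, mul_pow]
      _ ≤ hh t ^ d := h1
  calc ENNReal.ofReal ((2*π)^d * (1/d))
      = ENNReal.ofReal ((2*π)^d) * ENNReal.ofReal (1/(d:ℝ)) := by
        rw [← ENNReal.ofReal_mul (by positivity)]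
    _ = ENNReal.ofReal ((2*π)^d) * ∫⁻ t in Set.Ioi (0:ℝ),
          ENNReal.ofReal (rexp (-(t * d))) := by rw [point_lintegral hb]
    _ = ∫⁻ t in Set.Ioi (0:ℝ), ENNReal.ofReal ((2*π)^d) *
          ENNReal.ofReal (rexp (-(t * d))) := by
        rw [lintegral_const_mul' _ _ ENNReal.ofReal_ne_top]
    _ = ∫⁻ t in Set.Ioi (0:ℝ), ENNReal.ofReal ((2*π)^d * rexp (-(t * d))) := by
        congr 1; ext t; rw [← ENNReal.ofReal_mul (by positivity)]
    _ ≤ JJ d := setLIntegral_mono' measurableSet_Ioi point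

lemma J_upper (d : ℕ) (hd : 5 ≤ d) {ε : ℝ} (hε : 0 < ε) (hε34 : ε ≤ 3/4) :
    JJ d ≤ ENNReal.ofReal ((2*π)^d * (1/((1-ε)*(d:ℝ)))) +
      ENNReal.ofReal ((2*π*(1 - 2/3*ε + 3/2*(2/3*ε)^2))^d) +
      ENNReal.ofReal ((2*π*(7/8))^(d-4) * (2*Real.sqrt π + 2*Real.sqrt 2*π)^4 * 2) := by
  set δ : ℝ := 2/3*ε with hδ
  set q : ℝ := 1 - δ + 3/2*δ^2 with hq
  set cc : ℝ := 2*Real.sqrt π + 2*Real.sqrt 2*π with hcc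
  have hδpos : 0 < δ := by positivity
  have hδhalf : δ ≤ 1/2 := by rw [hδ]; linarith
  have hdis1 : Disjoint (Set.Ioc (0:ℝ) δ ∪ Set.Ioc δ (1/2)) (Set.Ioi (1/2)) := by
    rw [Set.Ioc_union_Ioc_eq_Ioc hδpos.le hδhalf]
    exact Set.Ioc_disjoint_Ioi le_rfl
  have hdis2 : Disjoint (Set.Ioc (0:ℝ) δ) (Set.Ioc δ (1/2)) :=
    Set.Ioc_disjoint_Ioc_of_le le_rfl
  have hsplit : JJ d = (∫⁻ t in Set.Ioc (0:ℝ) δ, ENNReal.ofReal (hh t ^ d)) +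
      (∫⁻ t in Set.Ioc δ (1/2), ENNReal.ofReal (hh t ^ d)) +
      (∫⁻ t in Set.Ioi (1/2:ℝ), ENNReal.ofReal (hh t ^ d)) := by
    rw [JJ, show Set.Ioi (0:ℝ) = (Set.Ioc 0 δ ∪ Set.Ioc δ (1/2)) ∪ Set.Ioi (1/2) by
      rw [Set.Ioc_union_Ioc_eq_Ioc hδpos.le hδhalf,
        Set.Ioc_union_Ioi_eq_Ioi (by norm_num : (0:ℝ) ≤ 1/2)]]
    rw [lintegral_union measurableSet_Ioi hdis1,
      lintegral_union measurableSet_Ioc hdis2]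
  have hb : (0:ℝ) < (1-ε)*(d:ℝ) := by
    have : (0:ℝ) < d := by positivity
    nlinarith
  have T1 : (∫⁻ t in Set.Ioc (0:ℝ) δ, ENNReal.ofReal (hh t ^ d)) ≤
      ENNReal.ofReal ((2*π)^d * (1/((1-ε)*(d:ℝ)))) := by
    have point : ∀ t ∈ Set.Ioc (0:ℝ) δ, ENNReal.ofReal (hh t ^ d) ≤
        ENNReal.ofReal ((2*π)^d * rexp (-(t * ((1-ε)*(d:ℝ))))) := by
      intro t ht
      apply ENNReal.ofReal_le_ofReal
      have h1 : hh t ≤ 2*π*rexp (-((1-ε)*t)) := hh_le_exp_eps hε ht.1.le ht.2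
      have h2 : hh t ^ d ≤ (2*π*rexp (-((1-ε)*t))) ^ d :=
        pow_le_pow_left₀ (hh_nonneg t) h1 d
      refine h2.trans_eq ?_
      have he : rexp (-((1-ε)*t)) ^ d = rexp (-(t * ((1-ε)*(d:ℝ)))) := by
        rw [← Real.exp_nat_mul]; ring_nf
      rw [mul_pow, mul_pow, he, ← mul_pow]
    calc (∫⁻ t in Set.Ioc (0:ℝ) δ, ENNReal.ofReal (hh t ^ d)) ≤
        ∫⁻ t in Set.Ioc (0:ℝ) δ, ENNReal.ofReal ((2*π)^d * rexp (-(t * ((1-ε)*(d:ℝ))))) :=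
          setLIntegral_mono' measurableSet_Ioc point
      _ ≤ ∫⁻ t in Set.Ioi (0:ℝ), ENNReal.ofReal ((2*π)^d * rexp (-(t * ((1-ε)*(d:ℝ))))) :=
          lintegral_mono_set Set.Ioc_subset_Ioi_self
      _ = ENNReal.ofReal ((2*π)^d * (1/((1-ε)*(d:ℝ)))) := by
          simp_rw [ENNReal.ofReal_mul (by positivity : (0:ℝ) ≤ (2*π)^d)]
          rw [lintegral_const_mul' _ _ ENNReal.ofReal_ne_top, point_lintegral hb]
  have T2 : (∫⁻ t in Set.Ioc δ (1/2), ENNReal.ofReal (hh t ^ d)) ≤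
      ENNReal.ofReal ((2*π*q)^d) := by
    have point : ∀ t ∈ Set.Ioc δ (1/2), ENNReal.ofReal (hh t ^ d) ≤
        ENNReal.ofReal ((2*π*q)^d) := by
      intro t ht
      apply ENNReal.ofReal_le_ofReal
      refine pow_le_pow_left₀ (hh_nonneg t) ?_ d
      have h1 : hh t ≤ hh δ := hh_anti ht.1.le
      have h2 : hh δ ≤ 2*π*(1-δ) + 3*π*δ^2 := hh_le_quad hδpos.le
      rw [hq]; nlinarith [Real.pi_pos]
    calc (∫⁻ t in Set.Ioc δ (1/2), ENNReal.ofReal (hh t ^ d)) ≤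
        ∫⁻ _ in Set.Ioc δ (1/2), ENNReal.ofReal ((2*π*q)^d) :=
          setLIntegral_mono' measurableSet_Ioc point
      _ = ENNReal.ofReal ((2*π*q)^d) * volume (Set.Ioc δ (1/2)) := by
          rw [setLIntegral_const]
      _ ≤ ENNReal.ofReal ((2*π*q)^d) * 1 := by
          refine mul_le_mul_right ?_ _
          rw [Real.volume_Ioc]
          exact ENNReal.ofReal_le_one.2 (by linarith)
      _ = ENNReal.ofReal ((2*π*q)^d) := mul_one _
  have T3 : (∫⁻ t in Set.Ioi (1/2:ℝ), ENNReal.ofReal (hh t ^ d)) ≤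
      ENNReal.ofReal ((2*π*(7/8))^(d-4) * cc^4 * 2) := by
    have point : ∀ t ∈ Set.Ioi (1/2:ℝ), ENNReal.ofReal (hh t ^ d) ≤
        ENNReal.ofReal ((2*π*(7/8))^(d-4) * cc^4) * ENNReal.ofReal (t ^ (-2:ℝ)) := by
      intro t ht
      have ht' : (1/2:ℝ) ≤ t := (Set.mem_Ioi.1 ht).le
      have ht0 : (0:ℝ) < t := by linarith
      rw [← ENNReal.ofReal_mul (by positivity)]
      apply ENNReal.ofReal_le_ofReal
      have hpow : hh t ^ d = hh t ^ (d-4) * hh t ^ 4 := by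
        rw [← pow_add, Nat.sub_add_cancel (by omega)]
      have hhalf : hh t ≤ 2*π*(7/8) := by
        have h1 : hh t ≤ hh (1/2) := hh_anti ht'
        have h2 : hh (1/2) ≤ 2*π*(1-1/2) + 3*π*(1/2)^2 := hh_le_quad (by norm_num)
        nlinarith [Real.pi_pos]
      have h3 : hh t ^ (d-4) ≤ (2*π*(7/8))^(d-4) :=
        pow_le_pow_left₀ (hh_nonneg t) hhalf _
      have h4 : hh t ^ 4 ≤ cc^4 * t ^ (-2:ℝ) := by
        have hs := hh_sqrt ht'
        have hst : 0 < Real.sqrt t := Real.sqrt_pos.2 ht0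
        have h5 : hh t ^ 4 ≤ (cc / Real.sqrt t)^4 :=
          pow_le_pow_left₀ (hh_nonneg t) hs 4
        refine h5.trans_eq ?_
        rw [div_pow]
        have h6 : Real.sqrt t ^ 4 = t^2 := by
          rw [show (4:ℕ) = 2*2 by norm_num, pow_mul, Real.sq_sqrt ht0.le]
        rw [h6, show (-2:ℝ) = -((2:ℕ):ℝ) by norm_num, Real.rpow_neg ht0.le,
          Real.rpow_natCast]
        ring
      rw [hpow, mul_assoc]
      exact mul_le_mul h3 h4 (by positivity) (by positivity)
    calc (∫⁻ t in Set.Ioi (1/2:ℝ), ENNReal.ofReal (hh t ^ d)) ≤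
        ∫⁻ t in Set.Ioi (1/2:ℝ), ENNReal.ofReal ((2*π*(7/8))^(d-4) * cc^4) *
          ENNReal.ofReal (t ^ (-2:ℝ)) := setLIntegral_mono' measurableSet_Ioi point
      _ = ENNReal.ofReal ((2*π*(7/8))^(d-4) * cc^4) *
          ∫⁻ t in Set.Ioi (1/2:ℝ), ENNReal.ofReal (t ^ (-2:ℝ)) := by
          rw [lintegral_const_mul' _ _ ENNReal.ofReal_ne_top]
      _ = ENNReal.ofReal ((2*π*(7/8))^(d-4) * cc^4) * ENNReal.ofReal 2 := by
          rw [tail_lintegral]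
      _ = ENNReal.ofReal ((2*π*(7/8))^(d-4) * cc^4 * 2) := by
          rw [← ENNReal.ofReal_mul (by positivity)]
  rw [hsplit]
  exact add_le_add (add_le_add T1 T2) T3

lemma integral_eq_toReal (d : ℕ) (hd : 1 ≤ d) :
    (∫ p in cube d, 1 / Efun d p) = (JJ d).toReal := by
  rw [MeasureTheory.integral_eq_lintegral_of_nonneg_ae
      (Filter.Eventually.of_forall fun p => one_div_nonneg.2 (Efun_nonneg d p))
      ((measurable_const.div (Efun_cont d).measurable).aestronglyMeasurable)]
  rw [key_identity d hd, JJ]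

lemma JJ_ne_top (d : ℕ) (hd : 5 ≤ d) : JJ d ≠ ⊤ := by
  have := J_upper d hd (by norm_num : (0:ℝ) < 1/2) (by norm_num)
  intro h
  rw [h] at this
  exact (ENNReal.add_ne_top.2 ⟨ENNReal.add_ne_top.2
    ⟨ENNReal.ofReal_ne_top, ENNReal.ofReal_ne_top⟩, ENNReal.ofReal_ne_top⟩)
    (top_le_iff.1 this)

lemma theta_lower (d : ℕ) (hd : 5 ≤ d) : 1 ≤ ((d:ℝ)/(2*π)^d) * (JJ d).toReal := by
  have hd5 : (5:ℝ) ≤ (d:ℝ) := by exact_mod_cast hd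
  have hd0 : (0:ℝ) < d := by linarith
  have h2π : (0:ℝ) < (2*π)^d := by positivity
  have hlow := J_lower d (by omega)
  have h1 : (2*π)^d * (1/(d:ℝ)) ≤ (JJ d).toReal :=
    (ENNReal.ofReal_le_iff_le_toReal (JJ_ne_top d hd)).1 hlow
  calc (1:ℝ) = ((d:ℝ)/(2*π)^d) * ((2*π)^d * (1/(d:ℝ))) := by field_simp
    _ ≤ ((d:ℝ)/(2*π)^d) * (JJ d).toReal :=
        mul_le_mul_of_nonneg_left h1 (by positivity)

lemma theta_upper (d : ℕ) (hd : 5 ≤ d) {ε : ℝ} (hε : 0 < ε) (hε34 : ε ≤ 3/4) :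
    ((d:ℝ)/(2*π)^d) * (JJ d).toReal ≤
      1/(1-ε) + (d:ℝ) * (1 - 2/3*ε + 3/2*(2/3*ε)^2)^d +
      (d:ℝ) * (7/8:ℝ)^(d-4) * (2*(2*Real.sqrt π + 2*Real.sqrt 2*π)^4/(2*π)^4) := by
  set q : ℝ := 1 - 2/3*ε + 3/2*(2/3*ε)^2 with hqdef
  set cc : ℝ := 2*Real.sqrt π + 2*Real.sqrt 2*π with hccdef
  have hd5 : (5:ℝ) ≤ (d:ℝ) := by exact_mod_cast hd
  have hd0 : (0:ℝ) < d := by linarith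
  have h2π : (0:ℝ) < (2*π)^d := by positivity
  have h1ε : (0:ℝ) < 1 - ε := by linarith
  have hq0 : (0:ℝ) < q := by rw [hqdef]; nlinarith
  have hcc0 : (0:ℝ) < cc := by positivity
  have hA1 : (0:ℝ) ≤ (2*π)^d * (1/((1-ε)*(d:ℝ))) := by positivity
  have hA2 : (0:ℝ) ≤ (2*π*q)^d := by positivity
  have hA3 : (0:ℝ) ≤ (2*π*(7/8))^(d-4) * cc^4 * 2 := by positivity
  have hJ := J_upper d hd hε hε34
  rw [← hqdef, ← hccdef] at hJ
  rw [show (2*π*(1 - 2/3*ε + 3/2*(2/3*ε)^2))^d = (2*π*q)^d by rw [hqdef]] at hJ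
  rw [← ENNReal.ofReal_add hA1 hA2, ← ENNReal.ofReal_add (by linarith) hA3] at hJ
  have hsum : (JJ d).toReal ≤ (2*π)^d * (1/((1-ε)*(d:ℝ))) + (2*π*q)^d +
      (2*π*(7/8))^(d-4) * cc^4 * 2 :=
    ENNReal.toReal_le_of_le_ofReal (by linarith) hJ
  have hmul := mul_le_mul_of_nonneg_left hsum
    (by positivity : (0:ℝ) ≤ (d:ℝ)/(2*π)^d)
  refine hmul.trans_eq ?_
  have hp : (2*π)^d = (2*π)^(d-4) * (2*π)^4 := by
    rw [← pow_add, Nat.sub_add_cancel (by omega)]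
  rw [mul_pow (2*π) q, mul_pow (2*π) ((7:ℝ)/8), hp]
  have hppos : (0:ℝ) < (2*π)^(d-4) := by positivity
  field_simp

theorem theta_tendsto_one :
    Tendsto
      (fun d : ℕ => ((d : ℝ) / (2 * Real.pi) ^ d) *
        ∫ p in (Set.univ.pi fun _ : Fin d => Set.Ioc (-Real.pi) Real.pi),
          1 / (∑ j : Fin d, (1 - Real.cos (p j))))
      atTop (nhds 1) := by
  rw [Metric.tendsto_atTop]
  intro ε' hε'
  set ε : ℝ := min (ε'/8) (3/4) with hεdef
  have hε0 : 0 < ε := lt_min (by linarith) (by norm_num)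
  have hε34 : ε ≤ 3/4 := min_le_right _ _
  have hε8 : ε ≤ ε'/8 := min_le_left _ _
  set q : ℝ := 1 - 2/3*ε + 3/2*(2/3*ε)^2 with hqdef
  have hq0 : (0:ℝ) ≤ q := by rw [hqdef]; nlinarith
  have hq1 : q < 1 := by rw [hqdef]; nlinarith
  set C : ℝ := 2*(2*Real.sqrt π + 2*Real.sqrt 2*π)^4/(2*π)^4 with hCdef
  have hC0 : (0:ℝ) ≤ C := by positivity
  have h1 : Tendsto (fun d : ℕ => (d:ℝ) * q ^ d) atTop (nhds 0) := by
    have := tendsto_pow_const_mul_const_pow_of_lt_one 1 hq0 hq1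
    simpa [pow_one] using this
  have h2 : Tendsto (fun d : ℕ => (d:ℝ) * (7/8:ℝ)^(d-4) * C) atTop (nhds 0) := by
    have ha : Tendsto (fun n : ℕ => ((n:ℝ) * (7/8:ℝ)^n + 4*(7/8:ℝ)^n) * C)
        atTop (nhds 0) := by
      have hb := tendsto_pow_const_mul_const_pow_of_lt_one 1
        (by norm_num : (0:ℝ) ≤ 7/8) (by norm_num : (7/8:ℝ) < 1)
      have hc := tendsto_pow_atTop_nhds_zero_of_lt_one
        (by norm_num : (0:ℝ) ≤ 7/8) (by norm_num : (7/8:ℝ) < 1)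
      have := (hb.add (hc.const_mul 4)).mul_const C
      simpa [pow_one] using this
    have hcomp := ha.comp (tendsto_sub_atTop_nat 4)
    refine hcomp.congr' ?_
    filter_upwards [eventually_ge_atTop 4] with d hd4
    have hcast : ((d - 4 : ℕ) : ℝ) = (d:ℝ) - 4 := by
      push_cast [Nat.cast_sub hd4]
      ring
    simp only [Function.comp]
    rw [hcast]
    ring
  have h3 : Tendsto (fun d : ℕ => (d:ℝ)*q^d + (d:ℝ)*(7/8:ℝ)^(d-4)*C)
      atTop (nhds 0) := by simpa using h1.add h2
  have hev := h3.eventually_lt_const (by linarith : (0:ℝ) < ε'/2)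
  obtain ⟨N, hN⟩ := Filter.eventually_atTop.1 (hev.and (eventually_ge_atTop 5))
  refine ⟨N, fun d hdN => ?_⟩
  obtain ⟨hsmall, hd5⟩ := hN d hdN
  have hint : (∫ p in (Set.univ.pi fun _ : Fin d => Set.Ioc (-Real.pi) Real.pi),
      1 / (∑ j : Fin d, (1 - Real.cos (p j)))) = (JJ d).toReal := by
    have := integral_eq_toReal d (by omega)
    exact this
  beta_reduce
  rw [hint, Real.dist_eq]
  have hlow := theta_lower d hd5
  have hup := theta_upper d hd5 hε0 hε34
  rw [← hqdef, ← hCdef] at hup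
  have h1me : (0:ℝ) < 1 - ε := by linarith
  have hfrac : 1/(1-ε) ≤ 1 + 4*ε := by
    rw [div_le_iff₀ h1me]
    nlinarith
  rw [abs_of_nonneg (by linarith : (0:ℝ) ≤ ((d:ℝ)/(2*π)^d) * (JJ d).toReal - 1)]
  have : ((d:ℝ)/(2*π)^d) * (JJ d).toReal ≤ 1 + 4*ε + ((d:ℝ)*q^d + (d:ℝ)*(7/8:ℝ)^(d-4)*C) := by
    calc ((d:ℝ)/(2*π)^d) * (JJ d).toReal ≤
        1/(1-ε) + (d:ℝ)*q^d + (d:ℝ)*(7/8:ℝ)^(d-4)*C := hup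
      _ ≤ 1 + 4*ε + ((d:ℝ)*q^d + (d:ℝ)*(7/8:ℝ)^(d-4)*C) := by linarith
  linarith
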